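/- Assume r0 : [0,π] → ℝ satisfies (H1) and (H2). Then the function φ ↦ ∫₀^π H₁(φ,ϕ) dϕ is continuous on [0,π], its infimum κ = inf_{φ∈[0,π]} ∫₀^π H₁(φ,ϕ) dϕ is strictly positive, and for every Ω < κ one has ν_Ω(φ) ≥ κ − Ω > 0 for all φ ∈ [0,π]. -/

import Mathlib

open Real Set MeasureTheory intervalIntegral

/-- The Gauss hypergeometric function `F(a,b;c;x) = Σₖ (a)ₖ(b)ₖ/((c)ₖ k!) xᵏ`. -/
noncomputable def hyp (a b c x : ℝ) : ℝ :=
  ∑' k : ℕ, ((ascPochhammer ℝ k).eval a * (ascPochhammer ℝ k).eval b /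
    ((ascPochhammer ℝ k).eval c * (Nat.factorial k : ℝ))) * x ^ k

/-- `R(φ,ϕ) = (r0(φ)+r0(ϕ))² + (cos φ − cos ϕ)²`. -/
noncomputable def Rker (r0 : ℝ → ℝ) (φ ϕ : ℝ) : ℝ :=
  (r0 φ + r0 ϕ) ^ 2 + (Real.cos φ - Real.cos ϕ) ^ 2

/-- `H₁(φ,ϕ) = (1/4) sin ϕ · r0(ϕ)² R(φ,ϕ)^{−3/2} F₁(4 r0(φ) r0(ϕ)/R(φ,ϕ))`,
with `F₁(x) = F(3/2,3/2;3;x)`. -/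
noncomputable def H1ker (r0 : ℝ → ℝ) (φ ϕ : ℝ) : ℝ :=
  (1 / 4) * Real.sin ϕ * r0 ϕ ^ 2 * Rker r0 φ ϕ ^ (-(3 / 2) : ℝ) *
    hyp (3 / 2) (3 / 2) 3 (4 * r0 φ * r0 ϕ / Rker r0 φ ϕ)

/-- `ν̃(φ) = ∫₀^π H₁(φ,ϕ) dϕ`. -/
noncomputable def nuBar (r0 : ℝ → ℝ) (φ : ℝ) : ℝ :=
  ∫ ϕ in (0:ℝ)..π, H1ker r0 φ ϕ

/-- `κ = inf_{φ ∈ [0,π]} ∫₀^π H₁(φ,ϕ) dϕ`. -/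
noncomputable def kappa (r0 : ℝ → ℝ) : ℝ :=
  sInf (nuBar r0 '' Set.Icc (0:ℝ) π)


set_option maxHeartbeats 1000000

noncomputable def hcoef (k : ℕ) : ℝ :=
  (ascPochhammer ℝ k).eval (3/2:ℝ) * (ascPochhammer ℝ k).eval (3/2:ℝ) /
    ((ascPochhammer ℝ k).eval (3:ℝ) * (Nat.factorial k : ℝ))

lemma hcoef_zero : hcoef 0 = 1 := by simp [hcoef]

lemma hcoef_nonneg (k : ℕ) : 0 ≤ hcoef k := by
  have h1 : (0:ℝ) < (ascPochhammer ℝ k).eval (3/2:ℝ) := ascPochhammer_pos _ _ (by norm_num)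
  have h2 : (0:ℝ) < (ascPochhammer ℝ k).eval (3:ℝ) := ascPochhammer_pos _ _ (by norm_num)
  have h3 : (0:ℝ) < (Nat.factorial k : ℝ) := by positivity
  exact div_nonneg (mul_nonneg h1.le h1.le) (mul_pos h2 h3).le

lemma hcoef_succ (k : ℕ) : hcoef (k+1) = hcoef k *
    ((3/2 + k) * (3/2 + k) / ((3 + k) * (k + 1))) := by
  have h1 : (0:ℝ) < (ascPochhammer ℝ k).eval (3/2:ℝ) := ascPochhammer_pos _ _ (by norm_num)
  have h2 : (0:ℝ) < (ascPochhammer ℝ k).eval (3:ℝ) := ascPochhammer_pos _ _ (by norm_num)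
  have h3 : (0:ℝ) < (Nat.factorial k : ℝ) := by positivity
  rw [hcoef, hcoef, ascPochhammer_succ_eval, ascPochhammer_succ_eval, Nat.factorial_succ]
  push_cast
  field_simp

lemma hcoef_le (k : ℕ) : hcoef k ≤ 3 / (k + 3) := by
  induction k with
  | zero => rw [hcoef_zero]; norm_num
  | succ k ih =>
    rw [hcoef_succ]
    have hk : (0:ℝ) ≤ (k:ℝ) := Nat.cast_nonneg k
    have h1 : (0:ℝ) < (3 + (k:ℝ)) * (k + 1) := by positivity
    have hrn : (0:ℝ) ≤ ((3/2 + (k:ℝ)) * (3/2 + k) / ((3 + k) * (k + 1))) := by positivity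
    calc hcoef k * ((3/2 + (k:ℝ)) * (3/2 + k) / ((3 + k) * (k + 1)))
        ≤ (3 / (k + 3)) * ((3/2 + (k:ℝ)) * (3/2 + k) / ((3 + k) * (k + 1))) :=
          mul_le_mul_of_nonneg_right ih hrn
      _ ≤ 3 / ((k:ℝ) + 1 + 3) := by
          rw [div_mul_div_comm, div_le_div_iff₀ (by positivity) (by positivity)]
          nlinarith [sq_nonneg ((k:ℝ))]
      _ = 3 / (((k+1:ℕ):ℝ) + 3) := by push_cast; ring

lemma hyp_eq (x : ℝ) : hyp (3/2) (3/2) 3 x = ∑' k : ℕ, hcoef k * x ^ k := rfl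

lemma hcoef_le_three (k : ℕ) : hcoef k ≤ 3 := by
  refine (hcoef_le k).trans ?_
  rw [div_le_iff₀ (by positivity)]
  nlinarith [Nat.cast_nonneg (α := ℝ) k]

lemma hyp_summable {x : ℝ} (hx : |x| < 1) : Summable (fun k : ℕ => hcoef k * x ^ k) := by
  refine Summable.of_norm ?_
  refine Summable.of_nonneg_of_le (fun k => norm_nonneg _) (fun k => ?_)
    ((summable_geometric_of_lt_one (abs_nonneg x) hx).mul_left 3)
  rw [norm_mul, norm_pow, Real.norm_eq_abs, Real.norm_eq_abs, abs_of_nonneg (hcoef_nonneg k)]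
  exact mul_le_mul_of_nonneg_right (hcoef_le_three k) (by positivity)

lemma hyp_nonneg {x : ℝ} (hx : 0 ≤ x) : 0 ≤ hyp (3/2) (3/2) 3 x := by
  rw [hyp_eq]
  exact tsum_nonneg fun k => mul_nonneg (hcoef_nonneg k) (pow_nonneg hx k)

lemma hyp_ge_one {x : ℝ} (hx : 0 ≤ x) (hx1 : x < 1) : 1 ≤ hyp (3/2) (3/2) 3 x := by
  rw [hyp_eq]
  have := Summable.le_tsum (hyp_summable (by rw [abs_of_nonneg hx]; exact hx1)) 0
    (fun k _ => mul_nonneg (hcoef_nonneg k) (pow_nonneg hx k))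
  simpa [hcoef_zero] using this

lemma hyp_le {x : ℝ} (hx : 0 ≤ x) (hx1 : x < 1) :
    hyp (3/2) (3/2) 3 x ≤ 1 + 3 * (-Real.log (1 - x)) := by
  have hxa : |x| < 1 := by rw [abs_of_nonneg hx]; exact hx1
  have hsum := hyp_summable hxa
  have hlog := hasSum_pow_div_log_of_abs_lt_one hxa
  have hlog3 := hlog.mul_left 3
  rw [hyp_eq, hsum.tsum_eq_zero_add, hcoef_zero]
  simp only [pow_zero, mul_one]
  have h1 : ∑' k : ℕ, hcoef (k + 1) * x ^ (k + 1)
      ≤ ∑' k : ℕ, 3 * (x ^ (k + 1) / ((k:ℝ) + 1)) := by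
    refine Summable.tsum_le_tsum (fun k => ?_) ((summable_nat_add_iff 1).2 hsum) hlog3.summable
    have h2 : hcoef (k+1) ≤ 3 / ((k:ℝ) + 1) := by
      refine (hcoef_le (k+1)).trans ?_
      rw [div_le_div_iff₀ (by positivity) (by positivity)]
      push_cast; nlinarith [Nat.cast_nonneg (α := ℝ) k]
    calc hcoef (k+1) * x ^ (k+1) ≤ (3 / ((k:ℝ) + 1)) * x ^ (k+1) :=
          mul_le_mul_of_nonneg_right h2 (pow_nonneg hx _)
      _ = 3 * (x ^ (k + 1) / ((k:ℝ) + 1)) := by ring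
  have h4 : ∑' k : ℕ, 3 * (x ^ (k + 1) / ((k:ℝ) + 1)) = 3 * (-Real.log (1 - x)) := by
    rw [hlog3.tsum_eq]
  linarith [h1, h4.le, h4.ge]

lemma hyp_continuousAt {x₀ : ℝ} (h : |x₀| < 1) :
    ContinuousAt (fun x => hyp (3/2) (3/2) 3 x) x₀ := by
  set r : ℝ := (1 + |x₀|) / 2 with hr
  have hr0 : 0 ≤ r := by positivity
  have hr1 : r < 1 := by rw [hr]; linarith
  have hx0r : |x₀| < r := by rw [hr]; linarith [abs_nonneg x₀]
  have hco : ContinuousOn (fun x => hyp (3/2) (3/2) 3 x) (Metric.closedBall 0 r) := by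
    simp only [hyp_eq]
    refine (tendstoUniformlyOn_tsum (f := fun k (x:ℝ) => hcoef k * x ^ k)
      (u := fun k => 3 * r ^ k)
      ((summable_geometric_of_lt_one hr0 hr1).mul_left 3) (fun k x hx => ?_)).continuousOn
      (Filter.Eventually.of_forall fun n => ?_).frequently
    · rw [Real.norm_eq_abs, abs_mul, abs_of_nonneg (hcoef_nonneg k), abs_pow]
      have hxr : |x| ≤ r := by simpa [Real.dist_eq] using hx
      exact mul_le_mul (hcoef_le_three k) (pow_le_pow_left₀ (abs_nonneg x) hxr k)
        (by positivity) (by norm_num)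
    · exact Continuous.continuousOn (by continuity)
  exact hco.continuousAt (Metric.closedBall_mem_nhds_of_mem (by simpa [Real.dist_eq] using hx0r))

lemma cos_diff_lower_aux {φ ϕ : ℝ} (h0 : 0 ≤ φ) (hϕ : ϕ ≤ π) (hle : φ ≤ ϕ) :
    (2 / π ^ 2) * (ϕ - φ) ^ 2 ≤ |Real.cos φ - Real.cos ϕ| := by
  have hπ := Real.pi_pos
  have h1 : Real.cos φ - Real.cos ϕ =
      2 * Real.sin ((φ + ϕ)/2) * Real.sin ((ϕ - φ)/2) := by
    rw [Real.cos_sub_cos, show (φ - ϕ)/2 = -((ϕ - φ)/2) by ring, Real.sin_neg]; ring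
  have hs2 : (ϕ - φ) / π ≤ Real.sin ((ϕ - φ)/2) := by
    have := Real.mul_le_sin (x := (ϕ - φ)/2) (by linarith) (by linarith)
    calc (ϕ - φ) / π = 2 / π * ((ϕ - φ)/2) := by field_simp
      _ ≤ _ := this
  have hs1 : (ϕ - φ) / π ≤ Real.sin ((φ + ϕ)/2) := by
    rcases le_or_gt ((φ + ϕ)/2) (π/2) with hc | hc
    · have := Real.mul_le_sin (x := (φ + ϕ)/2) (by linarith) hc
      calc (ϕ - φ) / π ≤ (φ + ϕ) / π := div_le_div_of_nonneg_right (by linarith) hπ.le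
        _ = 2 / π * ((φ + ϕ)/2) := by field_simp
        _ ≤ _ := this
    · have h2 : Real.sin ((φ + ϕ)/2) = Real.sin (π - (φ + ϕ)/2) := by
        rw [Real.sin_pi_sub]
      have := Real.mul_le_sin (x := π - (φ + ϕ)/2) (by linarith) (by linarith)
      calc (ϕ - φ) / π ≤ (2*π - (φ + ϕ)) / π := div_le_div_of_nonneg_right (by linarith) hπ.le
        _ = 2 / π * (π - (φ + ϕ)/2) := by field_simp
        _ ≤ Real.sin (π - (φ + ϕ)/2) := this
        _ = _ := h2.symm
  have hnn : (0:ℝ) ≤ (ϕ - φ) / π := div_nonneg (by linarith) hπ.le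
  have h3 : 2 * ((ϕ - φ)/π) * ((ϕ - φ)/π) ≤ 2 * Real.sin ((φ + ϕ)/2) * Real.sin ((ϕ - φ)/2) := by
    have hs1' : (0:ℝ) ≤ Real.sin ((φ + ϕ)/2) := le_trans hnn hs1
    nlinarith
  calc (2 / π ^ 2) * (ϕ - φ) ^ 2 = 2 * ((ϕ - φ)/π) * ((ϕ - φ)/π) := by
        field_simp
    _ ≤ 2 * Real.sin ((φ + ϕ)/2) * Real.sin ((ϕ - φ)/2) := h3
    _ = Real.cos φ - Real.cos ϕ := h1.symm
    _ ≤ |Real.cos φ - Real.cos ϕ| := le_abs_self _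

lemma cos_diff_lower {φ ϕ : ℝ} (hφ : φ ∈ Set.Icc 0 π) (hϕ : ϕ ∈ Set.Icc 0 π) :
    (2 / π ^ 2) * (ϕ - φ) ^ 2 ≤ |Real.cos φ - Real.cos ϕ| := by
  rcases le_total φ ϕ with h | h
  · exact cos_diff_lower_aux hφ.1 hϕ.2 h
  · have := cos_diff_lower_aux hϕ.1 hφ.2 h
    rw [abs_sub_comm] at this
    calc (2 / π ^ 2) * (ϕ - φ) ^ 2 = (2 / π ^ 2) * (φ - ϕ) ^ 2 := by ring
      _ ≤ _ := this

lemma abs_log_le {t : ℝ} (ht : 0 < t) {b : ℝ} (htb : t ≤ b) :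
    |Real.log t| ≤ 2 * t ^ (-(1:ℝ)/2) + |Real.log b| := by
  have hrp : (0:ℝ) < t ^ (-(1:ℝ)/2) := Real.rpow_pos_of_pos ht _
  rcases le_or_gt t 1 with h1 | h1
  · have hl : Real.log t ≤ 0 := Real.log_nonpos ht.le h1
    rw [abs_of_nonpos hl]
    have h2 : Real.log (t ^ (-(1:ℝ)/2)) ≤ t ^ (-(1:ℝ)/2) - 1 :=
      Real.log_le_sub_one_of_pos hrp
    rw [Real.log_rpow ht] at h2
    have : -Real.log t ≤ 2 * t ^ (-(1:ℝ)/2) - 2 := by linarith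
    have := abs_nonneg (Real.log b)
    linarith
  · have hl : 0 ≤ Real.log t := Real.log_nonneg h1.le
    rw [abs_of_nonneg hl]
    have h2 : Real.log t ≤ Real.log b := Real.log_le_log ht htb
    have h3 : Real.log b ≤ |Real.log b| := le_abs_self _
    linarith

lemma abs_log_intInt_right {b : ℝ} (hb : 0 ≤ b) :
    IntervalIntegrable (fun t => |Real.log t|) volume 0 b := by
  rw [intervalIntegrable_iff_integrableOn_Ioc_of_le hb]
  have hbound : IntegrableOn (fun t => 2 * t ^ (-(1:ℝ)/2) + |Real.log b|) (Ioc 0 b) volume := by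
    have h1 : IntervalIntegrable (fun t : ℝ => t ^ (-(1:ℝ)/2)) volume 0 b :=
      intervalIntegrable_rpow' (by norm_num)
    rw [intervalIntegrable_iff_integrableOn_Ioc_of_le hb] at h1
    exact (h1.const_mul 2).add (integrableOn_const measure_Ioc_lt_top.ne)
  refine Integrable.mono hbound ?_ ?_
  · exact ((Real.measurable_log.comp measurable_id).abs).aestronglyMeasurable
  · refine (ae_restrict_iff' measurableSet_Ioc).2 (Filter.Eventually.of_forall fun t ht => ?_)
    have h2 := abs_log_le ht.1 ht.2
    have hrp : (0:ℝ) < t ^ (-(1:ℝ)/2) := Real.rpow_pos_of_pos ht.1 _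
    have hnn : (0:ℝ) ≤ 2 * t ^ (-(1:ℝ)/2) + |Real.log b| :=
      add_nonneg (by linarith) (abs_nonneg _)
    rw [Real.norm_eq_abs, Real.norm_eq_abs, abs_abs, abs_of_nonneg hnn]
    exact h2

lemma abs_log_intervalInt (a b : ℝ) :
    IntervalIntegrable (fun t => |Real.log t|) volume a b := by
  have key : ∀ c : ℝ, IntervalIntegrable (fun t => |Real.log t|) volume 0 c := by
    intro c
    rcases le_or_gt 0 c with hc | hc
    · exact abs_log_intInt_right hc
    · have h1 : IntervalIntegrable (fun t => |Real.log t|) volume 0 (-c) :=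
        abs_log_intInt_right (by linarith)
      have h2 := (IntervalIntegrable.iff_comp_neg).1 h1
      simp only [neg_zero, neg_neg] at h2
      have h3 : (fun x : ℝ => |Real.log (-x)|) = fun x => |Real.log x| := by
        funext x; rw [Real.log_neg_eq_log]
      rwa [h3] at h2
  exact ((key a).symm).trans (key b)

lemma abs_log_sub_integrableOn (φ : ℝ) :
    IntegrableOn (fun ϕ => |Real.log (ϕ - φ)|) (Ioc 0 π) volume := by
  have h := (abs_log_intervalInt (0 - φ) (π - φ)).comp_sub_right φ
  simp only [sub_add_cancel, zero_sub] at h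
  have h2 : IntervalIntegrable (fun x => |Real.log (x - φ)|) volume 0 π := by
    simpa using h
  rwa [intervalIntegrable_iff_integrableOn_Ioc_of_le Real.pi_pos.le] at h2

noncomputable def Kone (C0 : ℝ) : ℝ :=
  C0^5/4 * (1 + 3*Real.log (4*C0^2+4) + 3*Real.log (π^4/4))
noncomputable def Ktwo (C0 : ℝ) : ℝ := 3*C0^5

section Kernel

variable {r0 : ℝ → ℝ} {C0 : ℝ}

lemma piQ_ge_one : (1:ℝ) ≤ π^4/4 := by
  have h := Real.pi_gt_three
  have h2 : (9:ℝ) < π^2 := by nlinarith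
  nlinarith

lemma Kone_nonneg (hC0 : 0 < C0) : 0 ≤ Kone C0 := by
  have h1 : (0:ℝ) ≤ Real.log (4*C0^2+4) := Real.log_nonneg (by nlinarith)
  have h2 : (0:ℝ) ≤ Real.log (π^4/4) := Real.log_nonneg piQ_ge_one
  have : (0:ℝ) < C0^5 := by positivity
  unfold Kone; nlinarith

lemma Ktwo_nonneg (hC0 : 0 < C0) : 0 ≤ Ktwo C0 := by unfold Ktwo; positivity

variable (hC0 : 0 < C0)
  (hH2 : ∀ φ ∈ Set.Icc (0:ℝ) π, C0⁻¹ * Real.sin φ ≤ r0 φ ∧ r0 φ ≤ C0 * Real.sin φ)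

include hC0 hH2

lemma r0_nonneg ⦃φ : ℝ⦄ (hφ : φ ∈ Set.Icc 0 π) : 0 ≤ r0 φ := by
  have hs : 0 ≤ Real.sin φ := Real.sin_nonneg_of_nonneg_of_le_pi hφ.1 hφ.2
  have := (hH2 φ hφ).1
  have : 0 ≤ C0⁻¹ * Real.sin φ := by positivity
  linarith [(hH2 φ hφ).1]

lemma r0_le_C0 ⦃φ : ℝ⦄ (hφ : φ ∈ Set.Icc 0 π) : r0 φ ≤ C0 := by
  have h := (hH2 φ hφ).2
  have hs : Real.sin φ ≤ 1 := Real.sin_le_one φ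
  nlinarith [Real.sin_nonneg_of_nonneg_of_le_pi hφ.1 hφ.2]

omit hC0 hH2 in
lemma Rker_nonneg' (φ ϕ : ℝ) : 0 ≤ Rker r0 φ ϕ := by unfold Rker; positivity

lemma Rker_le ⦃φ : ℝ⦄ (hφ : φ ∈ Set.Icc 0 π) ⦃ϕ : ℝ⦄ (hϕ : ϕ ∈ Set.Icc 0 π) :
    Rker r0 φ ϕ ≤ 4*C0^2+4 := by
  have ha0 := r0_nonneg hC0 hH2 hφ
  have hb0 := r0_nonneg hC0 hH2 hϕ
  have ha1 := r0_le_C0 hC0 hH2 hφ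
  have hb1 := r0_le_C0 hC0 hH2 hϕ
  have hc1 := Real.cos_le_one φ
  have hc2 := Real.neg_one_le_cos φ
  have hc3 := Real.cos_le_one ϕ
  have hc4 := Real.neg_one_le_cos ϕ
  unfold Rker; nlinarith

omit hC0 hH2 in
lemma cos_sq_pos ⦃φ : ℝ⦄ (hφ : φ ∈ Set.Icc 0 π) ⦃ϕ : ℝ⦄ (hϕ : ϕ ∈ Set.Icc 0 π)
    (hne : φ ≠ ϕ) : 0 < (Real.cos φ - Real.cos ϕ) ^ 2 := by
  have hc : Real.cos φ ≠ Real.cos ϕ := fun h => hne (Real.injOn_cos hφ hϕ h)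
  have : Real.cos φ - Real.cos ϕ ≠ 0 := sub_ne_zero.2 hc
  positivity

lemma Rker_pos ⦃φ : ℝ⦄ (hφ : φ ∈ Set.Icc 0 π) ⦃ϕ : ℝ⦄ (hϕ : ϕ ∈ Set.Icc 0 π)
    (hne : φ ≠ ϕ) : 0 < Rker r0 φ ϕ := by
  have := cos_sq_pos hφ hϕ hne
  unfold Rker; nlinarith [sq_nonneg (r0 φ + r0 ϕ)]

lemma x_nonneg ⦃φ : ℝ⦄ (hφ : φ ∈ Set.Icc 0 π) ⦃ϕ : ℝ⦄ (hϕ : ϕ ∈ Set.Icc 0 π) :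
    0 ≤ 4 * r0 φ * r0 ϕ / Rker r0 φ ϕ := by
  have ha := r0_nonneg hC0 hH2 hφ
  have hb := r0_nonneg hC0 hH2 hϕ
  have hR : 0 ≤ Rker r0 φ ϕ := by unfold Rker; positivity
  exact div_nonneg (by positivity) hR

lemma x_lt_one ⦃φ : ℝ⦄ (hφ : φ ∈ Set.Icc 0 π) ⦃ϕ : ℝ⦄ (hϕ : ϕ ∈ Set.Icc 0 π)
    (hne : φ ≠ ϕ) : 4 * r0 φ * r0 ϕ / Rker r0 φ ϕ < 1 := by
  have hR := Rker_pos hC0 hH2 hφ hϕ hne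
  have hc := cos_sq_pos hφ hϕ hne
  rw [div_lt_one hR]
  unfold Rker at *
  nlinarith [sq_nonneg (r0 φ - r0 ϕ)]

lemma H1_nonneg ⦃φ : ℝ⦄ (hφ : φ ∈ Set.Icc 0 π) ⦃ϕ : ℝ⦄ (hϕ : ϕ ∈ Set.Icc 0 π) :
    0 ≤ H1ker r0 φ ϕ := by
  have hs : 0 ≤ Real.sin ϕ := Real.sin_nonneg_of_nonneg_of_le_pi hϕ.1 hϕ.2
  have hx := x_nonneg hC0 hH2 hφ hϕ
  have hh := hyp_nonneg hx
  have hrp : 0 ≤ Rker r0 φ ϕ ^ (-(3/2) : ℝ) :=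
    Real.rpow_nonneg (by unfold Rker; positivity) _
  unfold H1ker
  have : (0:ℝ) ≤ r0 ϕ ^ 2 := sq_nonneg _
  positivity

/-- The master pointwise bound with logarithmic singularity. -/
lemma H1_le ⦃φ : ℝ⦄ (hφ : φ ∈ Set.Icc 0 π) ⦃ϕ : ℝ⦄ (hϕ : ϕ ∈ Set.Icc 0 π)
    (hne : φ ≠ ϕ) :
    H1ker r0 φ ϕ ≤ Kone C0 + Ktwo C0 * |Real.log (ϕ - φ)| := by
  have hsnn : 0 ≤ Real.sin ϕ := Real.sin_nonneg_of_nonneg_of_le_pi hϕ.1 hϕ.2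
  have habs : 0 ≤ Kone C0 + Ktwo C0 * |Real.log (ϕ - φ)| :=
    add_nonneg (Kone_nonneg hC0) (mul_nonneg (Ktwo_nonneg hC0) (abs_nonneg _))
  rcases eq_or_lt_of_le hsnn with hs0 | hs
  · -- sin ϕ = 0, so r0 ϕ = 0 and H1 = 0
    have hb0 : r0 ϕ = 0 := le_antisymm (by have := (hH2 ϕ hϕ).2; nlinarith)
      (r0_nonneg hC0 hH2 hϕ)
    unfold H1ker; rw [hb0]; ring_nf; simpa using habs
  -- main case
  set a := r0 φ with ha_def
  set b := r0 ϕ with hb_def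
  set R := Rker r0 φ ϕ with hR_def
  set sϕ := Real.sin ϕ with hsϕ_def
  have ha0 : 0 ≤ a := r0_nonneg hC0 hH2 hφ
  have haC : a ≤ C0 := r0_le_C0 hC0 hH2 hφ
  have hbC : b ≤ C0 * sϕ := (hH2 ϕ hϕ).2
  have hyb : C0⁻¹ * sϕ ≤ b := (hH2 ϕ hϕ).1
  set y := C0⁻¹ * sϕ with hy_def
  have hy : 0 < y := by positivity
  have hb0 : 0 < b := lt_of_lt_of_le hy hyb
  have hRy : y^2 ≤ R := by
    have : y^2 ≤ (a+b)^2 := by nlinarith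
    unfold R; unfold Rker; nlinarith [sq_nonneg (Real.cos φ - Real.cos ϕ)]
  have hRpos : 0 < R := lt_of_lt_of_le (by positivity) hRy
  have hRM : R ≤ 4*C0^2+4 := Rker_le hC0 hH2 hφ hϕ
  -- rpow bound
  have hy3 : (0:ℝ) < y^3 := by positivity
  have h32 : (y^2 : ℝ) ^ ((3:ℝ)/2) = y^3 := by
    rw [← Real.rpow_natCast y 2, ← Real.rpow_mul hy.le, ← Real.rpow_natCast y 3]
    norm_num
  have hmono : (y^2 : ℝ) ^ ((3:ℝ)/2) ≤ R ^ ((3:ℝ)/2) :=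
    Real.rpow_le_rpow (by positivity) hRy (by norm_num)
  have hrpow : R ^ (-(3/2) : ℝ) ≤ (y^3)⁻¹ := by
    rw [show (-(3/2) : ℝ) = -((3:ℝ)/2) by norm_num, Real.rpow_neg hRpos.le]
    exact inv_anti₀ hy3 (h32 ▸ hmono)
  have hrpow0 : 0 ≤ R ^ (-(3/2) : ℝ) := Real.rpow_nonneg hRpos.le _
  -- prefactor bound
  have hP : (1/4) * sϕ * b^2 * R ^ (-(3/2) : ℝ) ≤ C0^5/4 := by
    have h1 : (1/4) * sϕ * b^2 * R ^ (-(3/2) : ℝ) ≤ (1/4) * sϕ * (C0*sϕ)^2 * (y^3)⁻¹ := by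
      have hb2 : b^2 ≤ (C0*sϕ)^2 := by nlinarith
      have : (1/4) * sϕ * b^2 ≤ (1/4) * sϕ * (C0*sϕ)^2 := by nlinarith
      have h0 : (0:ℝ) ≤ (1/4) * sϕ * b^2 := by positivity
      calc (1/4) * sϕ * b^2 * R ^ (-(3/2) : ℝ) ≤ (1/4) * sϕ * b^2 * (y^3)⁻¹ := by
            apply mul_le_mul_of_nonneg_left hrpow h0
        _ ≤ (1/4) * sϕ * (C0*sϕ)^2 * (y^3)⁻¹ := by
            apply mul_le_mul_of_nonneg_right this (by positivity)
      done
    have h2 : (1/4) * sϕ * (C0*sϕ)^2 * (y^3)⁻¹ = C0^5/4 := by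
      unfold y
      field_simp
    linarith
  -- x facts
  set x := 4 * a * b / R with hx_def
  have hx0 : 0 ≤ x := x_nonneg hC0 hH2 hφ hϕ
  have hx1 : x < 1 := x_lt_one hC0 hH2 hφ hϕ hne
  set D := (a - b)^2 + (Real.cos φ - Real.cos ϕ)^2 with hD_def
  have hDpos : 0 < D := by
    have := cos_sq_pos hφ hϕ hne
    positivity
  have hone_sub : 1 - x = D / R := by
    rw [hx_def, eq_div_iff hRpos.ne', sub_mul, div_mul_cancel₀ _ hRpos.ne', hD_def, hR_def,
      ha_def, hb_def]; unfold Rker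
    ring
  -- the log bound
  set t := |φ - ϕ| with ht_def
  have ht0 : 0 < t := abs_pos.2 (sub_ne_zero.2 hne)
  have hD4 : (4/π^4) * t^4 ≤ D := by
    have hcl := cos_diff_lower hφ hϕ
    have hπ := Real.pi_pos
    have habs2 : ((2 / π ^ 2) * (ϕ - φ) ^ 2)^2 ≤ (Real.cos φ - Real.cos ϕ)^2 := by
      rw [← sq_abs (Real.cos φ - Real.cos ϕ)]
      have hnn : 0 ≤ (2 / π ^ 2) * (ϕ - φ) ^ 2 := by positivity
      nlinarith
    have ht2 : t^2 = (ϕ - φ)^2 := by rw [ht_def, sq_abs]; ring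
    have : (4/π^4) * t^4 = ((2 / π ^ 2) * (ϕ - φ) ^ 2)^2 := by
      rw [show t^4 = (t^2)^2 by ring, ht2]; field_simp; ring
    rw [this]
    unfold D
    nlinarith [sq_nonneg (a - b)]
  have hL : -Real.log (1 - x) ≤
      Real.log (4*C0^2+4) + Real.log (π^4/4) + 4 * |Real.log t| := by
    rw [hone_sub, Real.log_div hDpos.ne' hRpos.ne']
    have hlogR : Real.log R ≤ Real.log (4*C0^2+4) := Real.log_le_log hRpos hRM
    have hlogD : Real.log ((4/π^4) * t^4) ≤ Real.log D :=
      Real.log_le_log (by positivity) hD4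
    have hπ := Real.pi_pos
    have hsplit : Real.log ((4/π^4) * t^4) = -Real.log (π^4/4) + 4 * Real.log t := by
      rw [Real.log_mul (by positivity) (by positivity), Real.log_pow]
      rw [show (4/π^4 : ℝ) = (π^4/4)⁻¹ by field_simp, Real.log_inv]
      push_cast; ring
    have hlt : -4 * Real.log t ≤ 4 * |Real.log t| := by
      have := neg_abs_le (Real.log t); nlinarith [abs_nonneg (Real.log t)]
    have := hsplit ▸ hlogD
    linarith
  -- combine
  have hhyp_le := hyp_le hx0 hx1
  have hhyp0 := hyp_nonneg hx0
  have hLnn : 0 ≤ -Real.log (1 - x) := by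
    have h1x : 1 - x ≤ 1 := by linarith
    have := Real.log_nonpos (by linarith) h1x
    linarith
  have hH1eq : H1ker r0 φ ϕ =
      ((1/4) * sϕ * b^2 * R ^ (-(3/2) : ℝ)) * hyp (3/2) (3/2) 3 x := by
    unfold H1ker
    unfold x R b sϕ a
    norm_num
  rw [hH1eq]
  have hPnn : 0 ≤ (1/4) * sϕ * b^2 * R ^ (-(3/2) : ℝ) := by positivity
  have step1 : ((1/4) * sϕ * b^2 * R ^ (-(3/2) : ℝ)) * hyp (3/2) (3/2) 3 x ≤
      (C0^5/4) * (1 + 3 * (-Real.log (1 - x))) := by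
    have hub : 0 ≤ 1 + 3 * (-Real.log (1 - x)) := by linarith
    calc ((1/4) * sϕ * b^2 * R ^ (-(3/2) : ℝ)) * hyp (3/2) (3/2) 3 x
        ≤ ((1/4) * sϕ * b^2 * R ^ (-(3/2) : ℝ)) * (1 + 3 * (-Real.log (1 - x))) :=
          mul_le_mul_of_nonneg_left hhyp_le hPnn
      _ ≤ (C0^5/4) * (1 + 3 * (-Real.log (1 - x))) :=
          mul_le_mul_of_nonneg_right hP hub
  have step2 : (C0^5/4) * (1 + 3 * (-Real.log (1 - x))) ≤
      Kone C0 + Ktwo C0 * |Real.log t| := by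
    have hC5 : (0:ℝ) < C0^5 := by positivity
    unfold Kone Ktwo
    nlinarith [hL]
  have htlog : |Real.log t| = |Real.log (ϕ - φ)| := by
    rw [ht_def, Real.log_abs, show (φ - ϕ) = -(ϕ - φ) by ring, Real.log_neg_eq_log]
  calc ((1/4) * sϕ * b^2 * R ^ (-(3/2) : ℝ)) * hyp (3/2) (3/2) 3 x
      ≤ (C0^5/4) * (1 + 3 * (-Real.log (1 - x))) := step1
    _ ≤ Kone C0 + Ktwo C0 * |Real.log t| := step2
    _ = Kone C0 + Ktwo C0 * |Real.log (ϕ - φ)| := by rw [htlog]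


/-- Joint continuity of the kernel off the diagonal. -/
lemma H1_contOn (hr0c : ContinuousOn r0 (Set.Icc 0 π)) :
    ContinuousOn (fun p : ℝ × ℝ => H1ker r0 p.1 p.2)
      {p : ℝ × ℝ | p.1 ∈ Set.Icc 0 π ∧ p.2 ∈ Set.Icc 0 π ∧ p.1 ≠ p.2} := by
  set W : Set (ℝ × ℝ) := {p : ℝ × ℝ | p.1 ∈ Set.Icc 0 π ∧ p.2 ∈ Set.Icc 0 π ∧ p.1 ≠ p.2}
    with hW_def
  have h1 : ContinuousOn (fun p : ℝ × ℝ => r0 p.1) W :=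
    hr0c.comp continuousOn_fst (fun p hp => hp.1)
  have h2 : ContinuousOn (fun p : ℝ × ℝ => r0 p.2) W :=
    hr0c.comp continuousOn_snd (fun p hp => hp.2.1)
  have hRc : ContinuousOn (fun p : ℝ × ℝ => Rker r0 p.1 p.2) W := by
    unfold Rker
    exact (((h1.add h2).pow 2).add
      ((((Real.continuous_cos.comp continuous_fst).continuousOn).sub
        ((Real.continuous_cos.comp continuous_snd).continuousOn)).pow 2))
  have hRne : ∀ p ∈ W, Rker r0 p.1 p.2 ≠ 0 := fun p hp =>
    (Rker_pos hC0 hH2 hp.1 hp.2.1 hp.2.2).ne'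
  have hrpowc : ContinuousOn (fun p : ℝ × ℝ => Rker r0 p.1 p.2 ^ (-(3/2) : ℝ)) W :=
    fun p hp => ((hRc p hp).rpow_const (Or.inl (hRne p hp)))
  have hxc : ContinuousOn (fun p : ℝ × ℝ => 4 * r0 p.1 * r0 p.2 / Rker r0 p.1 p.2) W :=
    ((continuousOn_const.mul h1).mul h2).div hRc hRne
  have hhypc : ContinuousOn
      (fun p : ℝ × ℝ => hyp (3/2) (3/2) 3 (4 * r0 p.1 * r0 p.2 / Rker r0 p.1 p.2)) W := by
    intro p hp
    have hx0 : 0 ≤ 4 * r0 p.1 * r0 p.2 / Rker r0 p.1 p.2 := x_nonneg hC0 hH2 hp.1 hp.2.1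
    have hx1 : 4 * r0 p.1 * r0 p.2 / Rker r0 p.1 p.2 < 1 :=
      x_lt_one hC0 hH2 hp.1 hp.2.1 hp.2.2
    exact (hyp_continuousAt (by rw [abs_of_nonneg hx0]; exact hx1)).comp_continuousWithinAt
      (hxc p hp)
  have hsin : ContinuousOn (fun p : ℝ × ℝ => (1/4) * Real.sin p.2) W :=
    continuousOn_const.mul ((Real.continuous_sin.comp continuous_snd).continuousOn)
  unfold H1ker
  exact (((hsin.mul (h2.pow 2)).mul hrpowc).mul hhypc)

lemma H1_integrableOn (hr0c : ContinuousOn r0 (Set.Icc 0 π)) ⦃φ : ℝ⦄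
    (hφ : φ ∈ Set.Icc 0 π) : IntegrableOn (H1ker r0 φ) (Ioc 0 π) volume := by
  set U : Set ℝ := Ioc 0 π \ {φ} with hU_def
  have hUm : MeasurableSet U := measurableSet_Ioc.diff (measurableSet_singleton φ)
  have hUsub : U ⊆ Ioc 0 π := diff_subset
  have hIoc_sub : (Ioc (0:ℝ) π) ⊆ Set.Icc 0 π := Ioc_subset_Icc_self
  have hcont1 : ContinuousOn (H1ker r0 φ) U := by
    have hmaps : Set.MapsTo (fun ϕ => (φ, ϕ)) U
        {p : ℝ × ℝ | p.1 ∈ Set.Icc 0 π ∧ p.2 ∈ Set.Icc 0 π ∧ p.1 ≠ p.2} := by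
      intro ϕ hϕ
      exact ⟨hφ, hIoc_sub hϕ.1, fun h => hϕ.2 (Set.mem_singleton_iff.2 h.symm)⟩
    intro ϕ hϕ
    exact ((H1_contOn hC0 hH2 hr0c) _ (hmaps hϕ)).comp
      ((continuous_const.prodMk continuous_id).continuousWithinAt) hmaps
  have haeset : (Ioc (0:ℝ) π : Set ℝ) =ᵐ[volume] U := by
    rw [MeasureTheory.ae_eq_set]
    constructor
    · refine measure_mono_null (fun x hx => ?_) (measure_singleton φ)
      rcases hx with ⟨hx1, hx2⟩
      by_contra h
      exact hx2 ⟨hx1, h⟩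
    · refine measure_mono_null (fun x hx => ?_) (measure_empty (μ := volume) (α := ℝ))
      exact absurd (hUsub hx.1) hx.2
  have haes : AEStronglyMeasurable (H1ker r0 φ) (volume.restrict (Ioc 0 π)) := by
    rw [Measure.restrict_congr_set haeset]
    exact (hcont1.aemeasurable hUm).aestronglyMeasurable
  have hglog : Integrable (fun ϕ => Kone C0 + Ktwo C0 * |Real.log (ϕ - φ)|)
      (volume.restrict (Ioc 0 π)) :=
    (integrable_const _).add ((abs_log_sub_integrableOn φ).const_mul _)
  refine hglog.mono haes ?_
  have hne_ae : ∀ᵐ ϕ ∂(volume : Measure ℝ), ϕ ≠ φ := by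
    refine ae_iff.2 ?_
    have : {a : ℝ | ¬a ≠ φ} = {φ} := by ext a; simp
    rw [this]; exact measure_singleton φ
  filter_upwards [ae_restrict_mem measurableSet_Ioc, ae_restrict_of_ae hne_ae] with ϕ hmem hne
  rw [Real.norm_eq_abs, Real.norm_eq_abs,
    abs_of_nonneg (H1_nonneg hC0 hH2 hφ (hIoc_sub hmem))]
  exact le_trans (H1_le hC0 hH2 hφ (hIoc_sub hmem) (fun h => hne h.symm)) (le_abs_self _)

omit hC0 hH2 in
lemma log_abs_between {t A B : ℝ} (hA : 0 < A) (hAt : A ≤ t) (htB : t ≤ B) :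
    |Real.log t| ≤ |Real.log A| + |Real.log B| := by
  have ht : 0 < t := lt_of_lt_of_le hA hAt
  have h1 : Real.log A ≤ Real.log t := Real.log_le_log hA hAt
  have h2 : Real.log t ≤ Real.log B := Real.log_le_log ht htB
  rw [abs_le]
  constructor
  · have := neg_abs_le (Real.log A)
    have := abs_nonneg (Real.log B)
    linarith
  · have := le_abs_self (Real.log B)
    have := abs_nonneg (Real.log A)
    linarith

omit hC0 hH2 in
lemma nuBar_eq (φ : ℝ) : nuBar r0 φ = ∫ ϕ in Ioc (0:ℝ) π, H1ker r0 φ ϕ := by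
  rw [nuBar, intervalIntegral.integral_of_le Real.pi_pos.le]

/-- Continuity of `nuBar` on `[0, π]`. -/
lemma nuBar_contOn (hr0c : ContinuousOn r0 (Set.Icc 0 π)) :
    ContinuousOn (nuBar r0) (Set.Icc 0 π) := by
  intro φ₀ hφ₀
  have hIoc_sub : (Ioc (0:ℝ) π) ⊆ Set.Icc 0 π := Ioc_subset_Icc_self
  rw [ContinuousWithinAt, Metric.tendsto_nhds]
  intro ε hε
  have h4 : 0 < ε/4 := by linarith
  -- the comparison function and its primitive
  set G : ℝ → ℝ := fun t => Kone C0 + Ktwo C0 * |Real.log t| with hG_def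
  have hGint : ∀ a b : ℝ, IntervalIntegrable G volume a b := fun a b =>
    (intervalIntegrable_const (c := Kone C0)).add
      ((abs_log_intervalInt a b).const_mul _)
  have hGnn : ∀ t, 0 ≤ G t := fun t =>
    add_nonneg (Kone_nonneg hC0) (mul_nonneg (Ktwo_nonneg hC0) (abs_nonneg _))
  set F : ℝ → ℝ := fun y => ∫ t in (0:ℝ)..y, G t with hF_def
  have hFc : Continuous F := intervalIntegral.continuous_primitive hGint 0
  set J : ℝ → ℝ := fun y => ∫ t in (-y)..y, G t with hJ_def
  have hJeq : ∀ y, J y = F y - F (-y) := by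
    intro y
    have h := intervalIntegral.integral_add_adjacent_intervals (hGint (-y) 0) (hGint 0 y)
    have h2 : F (-y) = - ∫ t in (-y)..(0:ℝ), G t := by
      rw [hF_def]; exact intervalIntegral.integral_symm _ _
    rw [hJ_def]
    simp only
    rw [← h, h2]; ring
  have hJc : Continuous J := by
    have h1 : Continuous fun y : ℝ => F y - F (-y) :=
      hFc.sub (hFc.comp continuous_neg)
    have h2 : J = fun y : ℝ => F y - F (-y) := funext hJeq
    rw [h2]; exact h1
  have hJ0 : J 0 = 0 := by rw [hJeq]; simp
  have htend : Filter.Tendsto J (nhds 0) (nhds 0) := by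
    have := hJc.tendsto 0
    rwa [hJ0] at this
  obtain ⟨δ, hδ0, hδ⟩ := Metric.tendsto_nhds_nhds.1 htend (ε/4) h4
  set η : ℝ := min (δ/6) (1/2) with hη_def
  have hη0 : 0 < η := lt_min (by linarith) (by norm_num)
  have hη1 : η < 1 := lt_of_le_of_lt (min_le_right _ _) (by norm_num)
  have hJsmall : J (3*η) < ε/4 := by
    have h3η : dist (3*η) 0 < δ := by
      rw [Real.dist_eq, sub_zero, abs_of_pos (by linarith)]
      have : η ≤ δ/6 := min_le_left _ _
      linarith
    have := hδ h3η
    rw [Real.dist_eq, sub_zero] at this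
    exact lt_of_le_of_lt (le_abs_self _) this
  -- near and far regions
  set Nset : Set ℝ := Ioc 0 π ∩ Ioo (φ₀ - 2*η) (φ₀ + 2*η) with hN_def
  set Fset : Set ℝ := Ioc 0 π \ Ioo (φ₀ - 2*η) (φ₀ + 2*η) with hFset_def
  have hFsub : Fset ⊆ Ioc 0 π := diff_subset
  have hFm : MeasurableSet Fset := measurableSet_Ioc.diff measurableSet_Ioo
  -- near-region smallness, uniformly in φ
  have hnear : ∀ φ ∈ Set.Icc (0:ℝ) π, |φ - φ₀| < η →
      ∫ ϕ in Nset, H1ker r0 φ ϕ ≤ J (3*η) := by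
    intro φ hφ hd
    have hIfull : IntegrableOn (H1ker r0 φ) (Ioc 0 π) volume :=
      H1_integrableOn hC0 hH2 hr0c hφ
    have hIN : IntegrableOn (H1ker r0 φ) Nset volume := hIfull.mono_set inter_subset_left
    set gb : ℝ → ℝ := fun ϕ => G (ϕ - φ) with hgb_def
    have hgbint : ∀ a b : ℝ, IntervalIntegrable gb volume a b := by
      intro a b
      have := (hGint (a - φ) (b - φ)).comp_sub_right φ
      simpa using this
    have hgbIN : IntegrableOn gb Nset volume := by
      refine (IntegrableOn.mono_set ?_ inter_subset_left)
      rw [← intervalIntegrable_iff_integrableOn_Ioc_of_le Real.pi_pos.le]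
      exact hgbint 0 π
    have step1 : ∫ ϕ in Nset, H1ker r0 φ ϕ ≤ ∫ ϕ in Nset, gb ϕ := by
      refine setIntegral_mono_ae_restrict hIN hgbIN ?_
      have hne_ae : ∀ᵐ ϕ ∂(volume : Measure ℝ), ϕ ≠ φ := by
        refine ae_iff.2 ?_
        have : {a : ℝ | ¬a ≠ φ} = {φ} := by ext a; simp
        rw [this]; exact measure_singleton φ
      have hNm : MeasurableSet Nset := measurableSet_Ioc.inter measurableSet_Ioo
      filter_upwards [ae_restrict_mem hNm, ae_restrict_of_ae hne_ae] with ϕ hmem hne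
      exact H1_le hC0 hH2 hφ (hIoc_sub hmem.1) (fun h => hne h.symm)
    have hsub2 : Nset ⊆ Ioc (φ - 3*η) (φ + 3*η) := by
      intro ϕ hϕ
      rcases hϕ with ⟨_, hϕ2⟩
      constructor
      · rcases hϕ2 with ⟨hl, hr⟩
        rcases abs_lt.1 hd with ⟨hd1, hd2⟩
        linarith
      · rcases hϕ2 with ⟨hl, hr⟩
        rcases abs_lt.1 hd with ⟨hd1, hd2⟩
        linarith
    have hgbI3 : IntegrableOn gb (Ioc (φ - 3*η) (φ + 3*η)) volume := by
      rw [← intervalIntegrable_iff_integrableOn_Ioc_of_le (by linarith)]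
      exact hgbint _ _
    have step2 : ∫ ϕ in Nset, gb ϕ ≤ ∫ ϕ in Ioc (φ - 3*η) (φ + 3*η), gb ϕ := by
      refine setIntegral_mono_set hgbI3 ?_ (HasSubset.Subset.eventuallyLE hsub2)
      exact Filter.Eventually.of_forall (fun ϕ => hGnn _)
    have step3 : ∫ ϕ in Ioc (φ - 3*η) (φ + 3*η), gb ϕ = J (3*η) := by
      rw [← intervalIntegral.integral_of_le (by linarith : φ - 3*η ≤ φ + 3*η)]
      have hcomp := intervalIntegral.integral_comp_sub_right (a := φ - 3*η)
        (b := φ + 3*η) G φ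
      rw [show φ - 3*η - φ = -(3*η) by ring, show φ + 3*η - φ = 3*η by ring] at hcomp
      rw [hJ_def]
      exact hcomp
    linarith
  -- far-region continuity
  set S' : Set ℝ := Set.Icc 0 π ∩ Metric.ball φ₀ η with hS'_def
  have hφ₀S' : φ₀ ∈ S' := ⟨hφ₀, Metric.mem_ball_self hη0⟩
  have hfarcont : ContinuousWithinAt (fun φ => ∫ ϕ in Fset, H1ker r0 φ ϕ) S' φ₀ := by
    refine continuousWithinAt_of_dominated (μ := volume.restrict Fset)
      (bound := fun _ => Kone C0 + Ktwo C0 * (|Real.log η| + |Real.log (π+2)|)) ?_ ?_ ?_ ?_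
    · filter_upwards [eventually_mem_nhdsWithin] with φ hφ
      have := H1_integrableOn hC0 hH2 hr0c hφ.1
      exact this.aestronglyMeasurable.mono_measure (Measure.restrict_mono hFsub le_rfl)
    · filter_upwards [eventually_mem_nhdsWithin] with φ hφ
      filter_upwards [ae_restrict_mem hFm] with ϕ hmem
      have hϕI : ϕ ∈ Set.Icc (0:ℝ) π := hIoc_sub hmem.1
      have hdist : η ≤ |ϕ - φ| := by
        have h1 : ¬ (φ₀ - 2*η < ϕ ∧ ϕ < φ₀ + 2*η) := fun h => hmem.2 h
        have h2 : |φ - φ₀| < η := by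
          have := hφ.2; rwa [Metric.mem_ball, Real.dist_eq] at this
        rcases abs_lt.1 h2 with ⟨h2a, h2b⟩
        rcases not_and_or.1 h1 with h | h
        · push_neg at h
          rw [abs_sub_comm, le_abs]
          left; linarith
        · push_neg at h
          rw [le_abs]
          left; linarith
      have hdist2 : |ϕ - φ| ≤ π + 2 := by
        have hϕ1 := hϕI.1; have hϕ2 := hϕI.2
        have hφ1 := hφ.1.1; have hφ2 := hφ.1.2
        rw [abs_le]; constructor <;> nlinarith [Real.pi_pos]
      have hne : φ ≠ ϕ := by
        intro h
        rw [h, sub_self, abs_zero] at hdist; linarith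
      have hb := H1_le hC0 hH2 hφ.1 hϕI hne
      have hlog : |Real.log (ϕ - φ)| ≤ |Real.log η| + |Real.log (π+2)| := by
        rw [← Real.log_abs]
        exact log_abs_between hη0 hdist hdist2
      rw [Real.norm_eq_abs, abs_of_nonneg (H1_nonneg hC0 hH2 hφ.1 hϕI)]
      have hK2 := Ktwo_nonneg hC0
      nlinarith
    · refine integrableOn_const ?_
      exact (lt_of_le_of_lt (measure_mono hFsub) measure_Ioc_lt_top).ne
    · filter_upwards [ae_restrict_mem hFm] with ϕ hmem
      have hϕI : ϕ ∈ Set.Icc (0:ℝ) π := hIoc_sub hmem.1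
      have hmaps : Set.MapsTo (fun φ => (φ, ϕ)) S'
          {p : ℝ × ℝ | p.1 ∈ Set.Icc 0 π ∧ p.2 ∈ Set.Icc 0 π ∧ p.1 ≠ p.2} := by
        intro φ hφ
        refine ⟨hφ.1, hϕI, ?_⟩
        intro h
        replace h : φ = ϕ := h
        have h1 : ¬ (φ₀ - 2*η < ϕ ∧ ϕ < φ₀ + 2*η) := fun hc => hmem.2 hc
        have h2 : |φ - φ₀| < η := by
          have := hφ.2; rwa [Metric.mem_ball, Real.dist_eq] at this
        rcases abs_lt.1 h2 with ⟨h2a, h2b⟩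
        rcases not_and_or.1 h1 with hh | hh <;> push_neg at hh <;> rw [← h] at hh <;> linarith
      exact ContinuousWithinAt.comp (f := fun φ : ℝ => (φ, ϕ))
        (g := fun p : ℝ × ℝ => H1ker r0 p.1 p.2)
        ((H1_contOn hC0 hH2 hr0c) _ (hmaps hφ₀S'))
        ((continuous_id.prodMk continuous_const).continuousWithinAt) hmaps
  -- assemble
  have hev_far : ∀ᶠ φ in nhdsWithin φ₀ S',
      dist (∫ ϕ in Fset, H1ker r0 φ ϕ) (∫ ϕ in Fset, H1ker r0 φ₀ ϕ) < ε/4 := by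
    have := Metric.tendsto_nhds.1 hfarcont (ε/4) h4
    exact this
  have hS'nhds : nhdsWithin φ₀ (Set.Icc (0:ℝ) π) = nhdsWithin φ₀ S' := by
    rw [hS'_def]
    exact nhdsWithin_restrict' _ (Metric.ball_mem_nhds φ₀ hη0)
  rw [hS'nhds]
  filter_upwards [hev_far, eventually_mem_nhdsWithin] with φ hfar hφS'
  have hφI : φ ∈ Set.Icc (0:ℝ) π := hφS'.1
  have hφd : |φ - φ₀| < η := by
    have := hφS'.2; rwa [Metric.mem_ball, Real.dist_eq] at this
  -- split the integrals
  have hsplit : ∀ ψ, ψ ∈ Set.Icc (0:ℝ) π →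
      nuBar r0 ψ = (∫ ϕ in Nset, H1ker r0 ψ ϕ) + ∫ ϕ in Fset, H1ker r0 ψ ϕ := by
    intro ψ hψ
    have hIfull : IntegrableOn (H1ker r0 ψ) (Ioc 0 π) volume :=
      H1_integrableOn hC0 hH2 hr0c hψ
    have hdisj : Disjoint Nset Fset := Set.disjoint_sdiff_right.mono_left
      (Set.inter_subset_right : Nset ⊆ Ioo (φ₀ - 2*η) (φ₀ + 2*η))
    rw [nuBar_eq]
    rw [← setIntegral_union hdisj hFm
      (hIfull.mono_set (Set.inter_subset_left : Nset ⊆ Ioc 0 π))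
      (hIfull.mono_set hFsub)]
    rw [show Nset ∪ Fset = Ioc 0 π from Set.inter_union_diff _ _]
  have hNnn : ∀ ψ, ψ ∈ Set.Icc (0:ℝ) π → 0 ≤ ∫ ϕ in Nset, H1ker r0 ψ ϕ := by
    intro ψ hψ
    refine setIntegral_nonneg (measurableSet_Ioc.inter measurableSet_Ioo) ?_
    intro ϕ hϕ
    exact H1_nonneg hC0 hH2 hψ (hIoc_sub hϕ.1)
  have hb1 := hnear φ hφI hφd
  have hb2 := hnear φ₀ hφ₀ (by rw [sub_self, abs_zero]; exact hη0)
  rw [Real.dist_eq, hsplit φ hφI, hsplit φ₀ hφ₀]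
  rw [Real.dist_eq] at hfar
  have hN1 := hNnn φ hφI
  have hN2 := hNnn φ₀ hφ₀
  rcases abs_lt.1 hfar with ⟨hf1, hf2⟩
  rw [abs_lt]
  constructor <;> linarith


lemma H1_intervalIntegrable (hr0c : ContinuousOn r0 (Set.Icc 0 π)) ⦃φ : ℝ⦄
    (hφ : φ ∈ Set.Icc 0 π) : IntervalIntegrable (H1ker r0 φ) volume 0 π := by
  rw [intervalIntegrable_iff_integrableOn_Ioc_of_le Real.pi_pos.le]
  exact H1_integrableOn hC0 hH2 hr0c hφ

lemma nuBar_pos_aux (hr0c : ContinuousOn r0 (Set.Icc 0 π))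
    (hpos : ∀ ψ ∈ Set.Ioo (0:ℝ) π, 0 < r0 ψ)
    {a b φ : ℝ} (h0a : 0 < a) (hab : a < b) (hbπ : b < π)
    (hφ : φ ∈ Set.Icc 0 π) (hnot : φ ∉ Set.Icc a b) :
    0 < nuBar r0 φ := by
  have hsub : Set.Icc a b ⊆ Set.Icc (0:ℝ) π :=
    Set.Icc_subset_Icc (by linarith) (by linarith)
  have hfull : IntervalIntegrable (H1ker r0 φ) volume 0 π :=
    H1_intervalIntegrable hC0 hH2 hr0c hφ
  have hmss : ∀ {c d : ℝ}, 0 ≤ c → c ≤ d → d ≤ π →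
      IntervalIntegrable (H1ker r0 φ) volume c d := by
    intro c d h1 h2 h3
    refine hfull.mono_set ?_
    rw [Set.uIcc_of_le h2, Set.uIcc_of_le Real.pi_pos.le]
    exact Set.Icc_subset_Icc h1 h3
  have hI1 : IntervalIntegrable (H1ker r0 φ) volume 0 a := hmss le_rfl h0a.le (by linarith)
  have hI2 : IntervalIntegrable (H1ker r0 φ) volume a b := hmss h0a.le hab.le hbπ.le
  have hI3 : IntervalIntegrable (H1ker r0 φ) volume b π :=
    hmss (by linarith) hbπ.le le_rfl
  have hposmid : 0 < ∫ ϕ in a..b, H1ker r0 φ ϕ := by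
    refine intervalIntegral_pos_of_pos_on hI2 ?_ hab
    intro ϕ hϕ
    have hϕI : ϕ ∈ Set.Icc (0:ℝ) π := hsub ⟨hϕ.1.le, hϕ.2.le⟩
    have hne : φ ≠ ϕ := fun h => hnot (h ▸ ⟨hϕ.1.le, hϕ.2.le⟩)
    have hsin : 0 < Real.sin ϕ :=
      Real.sin_pos_of_pos_of_lt_pi (by linarith [hϕ.1]) (by linarith [hϕ.2])
    have hr0 : 0 < r0 ϕ := hpos ϕ ⟨by linarith [hϕ.1], by linarith [hϕ.2]⟩
    have hR : 0 < Rker r0 φ ϕ := Rker_pos hC0 hH2 hφ hϕI hne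
    have hrp : 0 < Rker r0 φ ϕ ^ (-(3/2) : ℝ) := Real.rpow_pos_of_pos hR _
    have hx0 : 0 ≤ 4 * r0 φ * r0 ϕ / Rker r0 φ ϕ := x_nonneg hC0 hH2 hφ hϕI
    have hx1 : 4 * r0 φ * r0 ϕ / Rker r0 φ ϕ < 1 := x_lt_one hC0 hH2 hφ hϕI hne
    have hhyp : 0 < hyp (3/2) (3/2) 3 (4 * r0 φ * r0 ϕ / Rker r0 φ ϕ) :=
      lt_of_lt_of_le zero_lt_one (hyp_ge_one hx0 hx1)
    unfold H1ker
    positivity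
  have hnn1 : 0 ≤ ∫ ϕ in (0:ℝ)..a, H1ker r0 φ ϕ := by
    refine intervalIntegral.integral_nonneg h0a.le ?_
    intro u hu
    exact H1_nonneg hC0 hH2 hφ (Set.Icc_subset_Icc le_rfl (by linarith) hu)
  have hnn3 : 0 ≤ ∫ ϕ in b..π, H1ker r0 φ ϕ := by
    refine intervalIntegral.integral_nonneg hbπ.le ?_
    intro u hu
    exact H1_nonneg hC0 hH2 hφ (Set.Icc_subset_Icc (by linarith) le_rfl hu)
  have e2 : (∫ ϕ in a..b, H1ker r0 φ ϕ) + ∫ ϕ in b..π, H1ker r0 φ ϕ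
      = ∫ ϕ in a..π, H1ker r0 φ ϕ :=
    intervalIntegral.integral_add_adjacent_intervals hI2 hI3
  have e1 : (∫ ϕ in (0:ℝ)..a, H1ker r0 φ ϕ) + ∫ ϕ in a..π, H1ker r0 φ ϕ
      = ∫ ϕ in (0:ℝ)..π, H1ker r0 φ ϕ :=
    intervalIntegral.integral_add_adjacent_intervals hI1 (hI2.trans hI3)
  rw [nuBar]
  linarith

lemma nuBar_pos (hr0c : ContinuousOn r0 (Set.Icc 0 π))
    (hpos : ∀ ψ ∈ Set.Ioo (0:ℝ) π, 0 < r0 ψ)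
    ⦃φ : ℝ⦄ (hφ : φ ∈ Set.Icc 0 π) : 0 < nuBar r0 φ := by
  have hπ := Real.pi_pos
  rcases le_or_gt φ (π/2) with h | h
  · refine nuBar_pos_aux hC0 hH2 hr0c hpos (a := 2*π/3) (b := 3*π/4)
      (by linarith) (by linarith) (by linarith) hφ ?_
    intro hc
    have := hc.1
    linarith
  · refine nuBar_pos_aux hC0 hH2 hr0c hpos (a := π/4) (b := π/3)
      (by linarith) (by linarith) (by linarith) hφ ?_
    intro hc
    have := hc.2
    linarith

end Kernel

/-- Assume `r0` satisfies (H1) and (H2). Then the function `φ ↦ ∫₀^π H₁(φ,ϕ) dϕ` is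
continuous on `[0,π]`, its infimum `κ` is strictly positive, and for every `Ω < κ` one has
`ν_Ω(φ) = ∫₀^π H₁(φ,ϕ) dϕ − Ω ≥ κ − Ω > 0` for all `φ ∈ [0,π]`. -/
theorem stmt15 (r0 : ℝ → ℝ)
    (hC2 : ContDiffOn ℝ 2 r0 (Set.Icc 0 π))
    (h0 : r0 0 = 0) (hπ : r0 π = 0)
    (hpos : ∀ φ ∈ Set.Ioo (0:ℝ) π, 0 < r0 φ)
    (C0 : ℝ) (hC0 : 0 < C0)
    (hH2 : ∀ φ ∈ Set.Icc (0:ℝ) π, C0⁻¹ * Real.sin φ ≤ r0 φ ∧ r0 φ ≤ C0 * Real.sin φ) :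
    ContinuousOn (nuBar r0) (Set.Icc 0 π) ∧
    0 < kappa r0 ∧
    ∀ Ω : ℝ, Ω < kappa r0 → ∀ φ ∈ Set.Icc (0:ℝ) π,
      0 < kappa r0 - Ω ∧ kappa r0 - Ω ≤ nuBar r0 φ - Ω := by
  have hr0c : ContinuousOn r0 (Set.Icc 0 π) := hC2.continuousOn
  have hcont : ContinuousOn (nuBar r0) (Set.Icc 0 π) := nuBar_contOn hC0 hH2 hr0c
  have himg : IsCompact (nuBar r0 '' Set.Icc 0 π) :=
    (isCompact_Icc).image_of_continuousOn hcont
  have hne : (nuBar r0 '' Set.Icc 0 π).Nonempty :=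
    ⟨nuBar r0 0, ⟨0, ⟨le_refl 0, Real.pi_pos.le⟩, rfl⟩⟩
  have hks : kappa r0 ∈ nuBar r0 '' Set.Icc 0 π := himg.sInf_mem hne
  obtain ⟨φs, hφs, hkeq⟩ := hks
  have hkpos : 0 < kappa r0 := by
    rw [← hkeq]
    exact nuBar_pos hC0 hH2 hr0c hpos hφs
  refine ⟨hcont, hkpos, ?_⟩
  intro Ω hΩ φ hφ
  have hle : kappa r0 ≤ nuBar r0 φ :=
    csInf_le himg.bddBelow ⟨φ, hφ, rfl⟩
  exact ⟨by linarith, by linarith⟩
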